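/- arXiv:1110.5201 — 2 statements merged into one kernel-verified Lean document; each statement's English description precedes it below -/
import Mathlib

section
/- Let (X, d) be a metric space with d bounded (for instance X compact), let T : X → X be any map and let x, y ∈ X. Then the following two conditions are equivalent: (A) for every t > 0, limsup_{n→∞} (1/n)·#{0 ≤ i ≤ n−1 : d(Tⁱx, Tⁱy) < t} = 1, and there exists t₀ > 0 with liminf_{n→∞} (1/n)·#{0 ≤ i ≤ n−1 : d(Tⁱx, Tⁱy) < t₀} < 1; (B) liminf_{n→∞} (1/n)·Σ_{i=0}^{n−1} d(Tⁱx, Tⁱy) = 0 and limsup_{n→∞} (1/n)·Σ_{i=0}^{n−1} d(Tⁱx, Tⁱy) > 0. That is, the pair (x, y) is DC2-scrambled if and only if the ergodic averages of the distance along the two orbits have lower limit zero and positive upper limit. -/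
open Filter

/-- The fraction of times `i ∈ [0, n-1]` with `dist (T^[i] x) (T^[i] y) < t`. -/
noncomputable def closeTimesFraction {X : Type*} [MetricSpace X] (T : X → X)
    (x y : X) (t : ℝ) (n : ℕ) : ℝ :=
  (((Finset.range n).filter (fun i => dist (T^[i] x) (T^[i] y) < t)).card : ℝ) / n

/-- The `n`-th ergodic average of the distance between the orbits of `x` and `y` under `T`. -/
noncomputable def distAverage {X : Type*} [MetricSpace X] (T : X → X)
    (x y : X) (n : ℕ) : ℝ :=
  (∑ i ∈ Finset.range n, dist (T^[i] x) (T^[i] y)) / n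

section aux

variable {X : Type*} [MetricSpace X] (T : X → X) (x y : X)

lemma ctf_nonneg (t : ℝ) (n : ℕ) : 0 ≤ closeTimesFraction T x y t n := by
  unfold closeTimesFraction; positivity

lemma ctf_le_one (t : ℝ) (n : ℕ) : closeTimesFraction T x y t n ≤ 1 := by
  unfold closeTimesFraction
  rcases Nat.eq_zero_or_pos n with h | h
  · simp [h]
  · rw [div_le_one (by exact_mod_cast h)]
    have := Finset.card_filter_le (Finset.range n) (fun i => dist (T^[i] x) (T^[i] y) < t)
    rw [Finset.card_range] at this
    exact_mod_cast this

lemma da_nonneg (n : ℕ) : 0 ≤ distAverage T x y n := by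
  unfold distAverage
  apply div_nonneg _ (by positivity)
  exact Finset.sum_nonneg fun i _ => dist_nonneg

lemma da_le {C : ℝ} (hC : ∀ a b : X, dist a b ≤ C) (n : ℕ) :
    distAverage T x y n ≤ max C 0 := by
  unfold distAverage
  rcases Nat.eq_zero_or_pos n with h | h
  · simp [h, le_max_right]
  · rw [div_le_iff₀ (by exact_mod_cast h)]
    calc ∑ i ∈ Finset.range n, dist (T^[i] x) (T^[i] y)
        ≤ ∑ _i ∈ Finset.range n, max C 0 :=
          Finset.sum_le_sum fun i _ => le_max_of_le_left (hC _ _)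
      _ = max C 0 * n := by rw [Finset.sum_const, Finset.card_range, nsmul_eq_mul, mul_comm]

/-- P1 : far terms each contribute at least `t`. -/
lemma da_lower (t : ℝ) {n : ℕ} (hn : 1 ≤ n) :
    t * (1 - closeTimesFraction T x y t n) ≤ distAverage T x y n := by
  have hn' : (0:ℝ) < n := by exact_mod_cast hn
  unfold closeTimesFraction distAverage
  set d : ℕ → ℝ := fun i => dist (T^[i] x) (T^[i] y) with hd
  set s := (Finset.range n).filter (fun i => d i < t) with hs
  have hk : s.card ≤ n := by
    have := Finset.card_filter_le (Finset.range n) (fun i => d i < t)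
    rwa [Finset.card_range] at this
  have hsplit : (∑ i ∈ (Finset.range n).filter (fun i => ¬ d i < t), d i)
      ≤ ∑ i ∈ Finset.range n, d i := by
    apply Finset.sum_le_sum_of_subset_of_nonneg (Finset.filter_subset _ _)
    intro i _ _; exact dist_nonneg
  have hlow : t * ((n : ℝ) - s.card)
      ≤ ∑ i ∈ (Finset.range n).filter (fun i => ¬ d i < t), d i := by
    have hcard : ((Finset.range n).filter (fun i => ¬ d i < t)).card = n - s.card := by
      rw [hs, Finset.filter_not, Finset.card_sdiff_of_subset (Finset.filter_subset _ _), Finset.card_range]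
    have h2 := Finset.card_nsmul_le_sum ((Finset.range n).filter (fun i => ¬ d i < t)) d t
      (fun i hi => le_of_not_gt (Finset.mem_filter.mp hi).2)
    rw [hcard, nsmul_eq_mul] at h2
    calc t * ((n:ℝ) - s.card) = ((n - s.card : ℕ) : ℝ) * t := by
          rw [Nat.cast_sub hk, mul_comm]
      _ ≤ _ := h2
  rw [le_div_iff₀ hn']
  calc t * (1 - (s.card : ℝ) / n) * n = t * ((n : ℝ) - s.card) := by
        field_simp
    _ ≤ _ := le_trans hlow hsplit

/-- P2 : close terms contribute `< t`, far terms at most `C`. -/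
lemma da_upper {C : ℝ} (hC : ∀ a b : X, dist a b ≤ C) {t : ℝ} (ht : 0 ≤ t) (n : ℕ) :
    distAverage T x y n ≤ t + max C 0 * (1 - closeTimesFraction T x y t n) := by
  rcases Nat.eq_zero_or_pos n with h | hn
  · subst h
    simp [distAverage, closeTimesFraction]
    positivity
  have hn' : (0:ℝ) < n := by exact_mod_cast hn
  unfold closeTimesFraction distAverage
  have hC'0 : (0:ℝ) ≤ max C 0 := le_max_right _ _
  set C' := max C 0 with hC'
  set d : ℕ → ℝ := fun i => dist (T^[i] x) (T^[i] y) with hd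
  set s := (Finset.range n).filter (fun i => d i < t) with hs
  have hk : s.card ≤ n := by
    have := Finset.card_filter_le (Finset.range n) (fun i => d i < t)
    rwa [Finset.card_range] at this
  have h1 : ∑ i ∈ s, d i ≤ (s.card : ℝ) * t := by
    have := Finset.sum_le_card_nsmul s d t (fun i hi => le_of_lt (Finset.mem_filter.mp hi).2)
    simpa [nsmul_eq_mul] using this
  have h2 : ∑ i ∈ (Finset.range n).filter (fun i => ¬ d i < t), d i
      ≤ ((n : ℝ) - s.card) * C' := by
    have hcard : ((Finset.range n).filter (fun i => ¬ d i < t)).card = n - s.card := by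
      rw [hs, Finset.filter_not, Finset.card_sdiff_of_subset (Finset.filter_subset _ _), Finset.card_range]
    have h3 := Finset.sum_le_card_nsmul ((Finset.range n).filter (fun i => ¬ d i < t)) d C'
      (fun i _ => le_max_of_le_left (hC _ _))
    rw [hcard, nsmul_eq_mul] at h3
    calc _ ≤ ((n - s.card : ℕ) : ℝ) * C' := h3
      _ = ((n:ℝ) - s.card) * C' := by rw [Nat.cast_sub hk]
  have hsum : ∑ i ∈ Finset.range n, d i ≤ (s.card : ℝ) * t + ((n:ℝ) - s.card) * C' := by
    rw [← Finset.sum_filter_add_sum_filter_not (Finset.range n) (fun i => d i < t) d]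
    exact add_le_add h1 h2
  rw [div_le_iff₀ hn']
  have hkr : (s.card : ℝ) ≤ n := by exact_mod_cast hk
  calc ∑ i ∈ Finset.range n, d i ≤ (s.card : ℝ) * t + ((n:ℝ) - s.card) * C' := hsum
    _ ≤ (n:ℝ) * t + ((n:ℝ) - s.card) * C' := by nlinarith
    _ = (t + C' * (1 - (s.card:ℝ) / n)) * n := by field_simp

end aux

/-- **Ergodic-average characterization of DC2 pairs.** Let `X` be a metric space with bounded
distance, `T : X → X` any map and `x, y ∈ X`. Then `(x, y)` is DC2-scrambled (the orbits are
`t`-close with upper density `1` for all `t > 0`, and `t₀`-close with lower density `< 1` for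
some `t₀ > 0`) if and only if the ergodic averages of `dist (T^[i] x) (T^[i] y)` have lower
limit `0` and positive upper limit. -/
theorem isDC2Pair_iff_distAverage {X : Type*} [MetricSpace X]
    (hbdd : ∃ C : ℝ, ∀ a b : X, dist a b ≤ C)
    (T : X → X) (x y : X) :
    ((∀ t : ℝ, 0 < t →
        Filter.limsup (fun n : ℕ => closeTimesFraction T x y t n) Filter.atTop = 1) ∧
      (∃ t₀ : ℝ, 0 < t₀ ∧
        Filter.liminf (fun n : ℕ => closeTimesFraction T x y t₀ n) Filter.atTop < 1)) ↔
    (Filter.liminf (fun n : ℕ => distAverage T x y n) Filter.atTop = 0 ∧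
      0 < Filter.limsup (fun n : ℕ => distAverage T x y n) Filter.atTop) := by
  obtain ⟨C, hC⟩ := hbdd
  have hC'0 : (0:ℝ) ≤ max C 0 := le_max_right _ _
  have hgBddAbove : IsBoundedUnder (· ≤ ·) atTop (fun n : ℕ => distAverage T x y n) :=
    isBoundedUnder_of ⟨max C 0, fun n => da_le T x y hC n⟩
  have hgBddBelow : IsBoundedUnder (· ≥ ·) atTop (fun n : ℕ => distAverage T x y n) :=
    isBoundedUnder_of ⟨0, fun n => da_nonneg T x y n⟩
  have hfBddAbove : ∀ t : ℝ,
      IsBoundedUnder (· ≤ ·) atTop (fun n : ℕ => closeTimesFraction T x y t n) :=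
    fun t => isBoundedUnder_of ⟨1, fun n => ctf_le_one T x y t n⟩
  have hfBddBelow : ∀ t : ℝ,
      IsBoundedUnder (· ≥ ·) atTop (fun n : ℕ => closeTimesFraction T x y t n) :=
    fun t => isBoundedUnder_of ⟨0, fun n => ctf_nonneg T x y t n⟩
  constructor
  · rintro ⟨H1, t₀, ht₀, H2⟩
    constructor
    · -- liminf g = 0
      apply le_antisymm
      · by_contra hpos
        push_neg at hpos
        set ε := liminf (fun n : ℕ => distAverage T x y n) atTop with hε
        have hεpos : 0 < ε := hpos
        have hlimsup := H1 (ε/4) (by positivity)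
        have hfreq : ∃ᶠ n in atTop,
            1 - (ε/4) / (max C 0 + 1) < closeTimesFraction T x y (ε/4) n := by
          apply frequently_lt_of_lt_limsup ((hfBddBelow _).isCoboundedUnder_le)
          rw [hlimsup]
          have : (0:ℝ) < (ε/4) / (max C 0 + 1) := by positivity
          linarith
        have hfreq2 : ∃ᶠ n in atTop, distAverage T x y n ≤ ε/2 := by
          apply hfreq.mono
          intro n hn
          have hup := da_upper T x y hC (le_of_lt (by positivity : (0:ℝ) < ε/4)) n
          have h1f : 1 - closeTimesFraction T x y (ε/4) n < (ε/4) / (max C 0 + 1) := by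
            linarith
          have h1f0 : 0 ≤ 1 - closeTimesFraction T x y (ε/4) n := by
            have := ctf_le_one T x y (ε/4) n; linarith
          have hμ : max C 0 * (1 - closeTimesFraction T x y (ε/4) n)
              ≤ (max C 0 + 1) * ((ε/4) / (max C 0 + 1)) :=
            mul_le_mul (by linarith) (le_of_lt h1f) h1f0 (by positivity)
          rw [mul_div_cancel₀ _ (by positivity : (max C 0 : ℝ) + 1 ≠ 0)] at hμ
          linarith
        have := liminf_le_of_frequently_le hfreq2 hgBddBelow
        rw [← hε] at this
        linarith
      · exact le_liminf_of_le (hgBddAbove.isCoboundedUnder_ge)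
          (Eventually.of_forall (da_nonneg T x y))
    · -- 0 < limsup g
      set b := (liminf (fun n : ℕ => closeTimesFraction T x y t₀ n) atTop + 1) / 2 with hb
      have hblt : liminf (fun n : ℕ => closeTimesFraction T x y t₀ n) atTop < b := by
        rw [hb]; linarith
      have hb1 : b < 1 := by rw [hb]; linarith
      have hfreq : ∃ᶠ n in atTop, closeTimesFraction T x y t₀ n < b :=
        frequently_lt_of_liminf_lt ((hfBddAbove _).isCoboundedUnder_ge) hblt
      have hfreq2 : ∃ᶠ n in atTop, t₀ * (1 - b) ≤ distAverage T x y n := by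
        apply (hfreq.and_eventually (eventually_ge_atTop 1)).mono
        rintro n ⟨hn, hn1⟩
        calc t₀ * (1 - b) ≤ t₀ * (1 - closeTimesFraction T x y t₀ n) := by nlinarith
          _ ≤ _ := da_lower T x y t₀ hn1
      have hls := le_limsup_of_frequently_le hfreq2 hgBddAbove
      have hpos : 0 < t₀ * (1 - b) := by nlinarith
      linarith
  · rintro ⟨H1, H2⟩
    constructor
    · intro t ht
      apply le_antisymm
      · exact limsup_le_of_le ((hfBddBelow t).isCoboundedUnder_le)
          (Eventually.of_forall (ctf_le_one T x y t))
      · apply le_of_forall_sub_le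
        intro ε hε
        have hfreq : ∃ᶠ n in atTop, distAverage T x y n < t * ε := by
          apply frequently_lt_of_liminf_lt (hgBddAbove.isCoboundedUnder_ge)
          rw [H1]; positivity
        have hfreq2 : ∃ᶠ n in atTop, 1 - ε ≤ closeTimesFraction T x y t n := by
          apply (hfreq.and_eventually (eventually_ge_atTop 1)).mono
          rintro n ⟨hn, hn1⟩
          have h1 := da_lower T x y t hn1
          have h2 : t * (1 - closeTimesFraction T x y t n) < t * ε := lt_of_le_of_lt h1 hn
          nlinarith [ctf_le_one T x y t n]
        exact le_limsup_of_frequently_le hfreq2 (hfBddAbove t)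
    · -- ∃ t₀
      set L := limsup (fun n : ℕ => distAverage T x y n) atTop with hL
      refine ⟨L/2, by linarith, ?_⟩
      by_contra hcon
      push_neg at hcon
      set δ := L / (4 * (max C 0 + 1)) with hδ
      have hδpos : 0 < δ := by positivity
      have hev : ∀ᶠ n in atTop, 1 - δ < closeTimesFraction T x y (L/2) n := by
        apply eventually_lt_of_lt_liminf _ (hfBddBelow _)
        calc (1:ℝ) - δ < 1 := by linarith
          _ ≤ _ := hcon
      have hev2 : ∀ᶠ n in atTop, distAverage T x y n ≤ L/2 + L/4 := by
        apply hev.mono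
        intro n hn
        have hup := da_upper T x y hC (by linarith : (0:ℝ) ≤ L/2) n
        have h1f : 1 - closeTimesFraction T x y (L/2) n < δ := by linarith
        have h1f0 : 0 ≤ 1 - closeTimesFraction T x y (L/2) n := by
          have := ctf_le_one T x y (L/2) n; linarith
        have hμ : max C 0 * (1 - closeTimesFraction T x y (L/2) n) ≤ (max C 0 + 1) * δ :=
          mul_le_mul (by linarith) (le_of_lt h1f) h1f0 (by positivity)
        have hδval : (max C 0 + 1) * δ = L/4 := by
          rw [hδ]; field_simp
        rw [hδval] at hμ
        linarith
      have hfin := limsup_le_of_le (hgBddBelow.isCoboundedUnder_le) hev2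
      rw [← hL] at hfin
      linarith
end

section
/- Let (X, 𝔅, μ) be a probability space and X' ∈ 𝔅 with μ(X') > 0, and let μ_{X'} be the conditional measure of μ on X'. Fix ε > 0, h > 0 and ε' > ε/μ(X'). Then there exists N ∈ ℕ such that for every n ≥ N and every finite measurable partition P of X: if P is μ-roughly equal with parameters ε, n, h, then P is μ_{X'}-roughly equal with parameters ε', n, h. -/
open MeasureTheory ProbabilityTheory

/-- `P` is a finite measurable partition of `X` (indexed by a finite index type). -/
structure IsPartition {X : Type*} [MeasurableSpace X] {ι : Type*} (P : ι → Set X) : Prop where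
  meas : ∀ i, MeasurableSet (P i)
  disj : Pairwise (Function.onFun Disjoint P)
  cover : ⋃ i, P i = Set.univ

open scoped Classical in
/-- The partition `P` is `μ`-roughly equal with parameters `ε, n, h`: the atoms whose measure
lies strictly between `2 ^ (-n (h + ε))` and `2 ^ (-n (h - ε))` (the "good" atoms) carry total
measure greater than `1 - ε`. -/
noncomputable def RoughlyEqual {X : Type*} [MeasurableSpace X] {ι : Type*} [Fintype ι]
    (μ : Measure X) (P : ι → Set X) (ε : ℝ) (n : ℕ) (h : ℝ) : Prop :=
  1 - ε < ∑ i ∈ Finset.univ.filter (fun i =>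
      (2 : ℝ) ^ (-(n : ℝ) * (h + ε)) < (μ (P i)).toReal ∧
      (μ (P i)).toReal < (2 : ℝ) ^ (-(n : ℝ) * (h - ε))), (μ (P i)).toReal

lemma sum_toReal_eq_one {X : Type*} [MeasurableSpace X] {l : ℕ} {P : Fin l → Set X}
    (hP : IsPartition P) (ρ : Measure X) [IsProbabilityMeasure ρ] :
    ∑ i, (ρ (P i)).toReal = 1 := by
  have h1 : ∑ i, ρ (P i) = 1 := by
    rw [← tsum_fintype (L := SummationFilter.unconditional _), ← measure_iUnion hP.disj hP.meas, hP.cover, measure_univ]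
  have h2 : (∑ i, ρ (P i)).toReal = 1 := by rw [h1]; simp
  rwa [ENNReal.toReal_sum (fun i _ => measure_ne_top ρ _)] at h2

/-- **Fact 1 of the paper.** Let `X' ⊆ X` have positive measure, and fix `ε > 0`, `h > 0` and
`ε' > ε / μ(X')`. Then for all large enough `n`, any finite measurable partition which is
`μ`-roughly equal with parameters `ε, n, h` is roughly equal with parameters `ε', n, h` for
the conditional measure `μ_{X'}`. -/
theorem roughlyEqual_conditional {X : Type*} [MeasurableSpace X]
    (μ : Measure X) [IsProbabilityMeasure μ]
    (X' : Set X) (hX'meas : MeasurableSet X') (hX'pos : 0 < μ X')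
    (ε h ε' : ℝ) (hε : 0 < ε) (hh : 0 < h) (hε' : ε / (μ X').toReal < ε') :
    ∃ N : ℕ, ∀ n : ℕ, N ≤ n →
      ∀ (l : ℕ) (P : Fin l → Set X), IsPartition P →
        RoughlyEqual μ P ε n h → RoughlyEqual (μ[|X']) P ε' n h := by
  classical
  set m := (μ X').toReal with hmdef
  have hμX'ne : μ X' ≠ 0 := hX'pos.ne'
  have hm : 0 < m := ENNReal.toReal_pos hμX'ne (measure_ne_top μ X')
  have hm1 : m ≤ 1 := by
    have h1 : μ X' ≤ 1 := prob_le_one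
    calc m ≤ (1 : ENNReal).toReal := ENNReal.toReal_mono ENNReal.one_ne_top h1
      _ = 1 := by simp
  have hεε : ε < ε' := lt_of_le_of_lt (by rw [le_div_iff₀ hm]; exact mul_le_of_le_one_right hε.le hm1) hε'
  have hc : 0 < ε' - ε := sub_pos.2 hεε
  have hδ : 0 < ε' - ε / m := sub_pos.2 hε'
  have h2c : 1 < (2:ℝ) ^ (ε' - ε) :=
    (Real.one_lt_rpow_iff_of_pos two_pos).2 (Or.inl ⟨one_lt_two, hc⟩)
  obtain ⟨N, hN⟩ := pow_unbounded_of_one_lt (1 / min m ((ε' - ε / m)/2)) h2c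
  refine ⟨N, fun n hn l P hP hRE => ?_⟩
  have hminpos : 0 < min m ((ε' - ε / m)/2) := lt_min hm (half_pos hδ)
  have hkey : (2:ℝ) ^ (-(n:ℝ) * (ε' - ε)) < min m ((ε' - ε / m)/2) := by
    have hA : (0:ℝ) < ((2:ℝ) ^ (ε' - ε)) ^ n := pow_pos (by positivity) n
    have h2 : 1 / min m ((ε' - ε / m)/2) < ((2:ℝ) ^ (ε' - ε)) ^ n :=
      hN.trans_le (pow_le_pow_right₀ h2c.le hn)
    have h3 : (((2:ℝ) ^ (ε' - ε)) ^ n)⁻¹ < min m ((ε' - ε / m)/2) := by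
      rw [inv_lt_comm₀ hA hminpos]
      rwa [one_div] at h2
    have h4 : (2:ℝ) ^ (-(n:ℝ) * (ε' - ε)) = (((2:ℝ) ^ (ε' - ε)) ^ n)⁻¹ := by
      rw [← Real.rpow_natCast ((2:ℝ) ^ (ε' - ε)) n, ← Real.rpow_mul two_pos.le,
        ← Real.rpow_neg two_pos.le]
      ring_nf
    rw [h4]; exact h3
  have key1 : (2:ℝ) ^ (-(n:ℝ) * (ε' - ε)) < m := hkey.trans_le (min_le_left _ _)
  have key2 : (2:ℝ) ^ (-(n:ℝ) * (ε' - ε)) < (ε' - ε / m)/2 := hkey.trans_le (min_le_right _ _)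
  -- notation
  set ν := μ[|X'] with hν
  haveI : IsProbabilityMeasure ν := cond_isProbabilityMeasure hμX'ne
  set f : Fin l → ℝ := fun i => (μ (P i)).toReal with hf
  set g : Fin l → ℝ := fun i => (ν (P i)).toReal with hg
  set b : ℝ := (2:ℝ) ^ (-(n:ℝ) * (h + ε)) with hb
  set B : ℝ := (2:ℝ) ^ (-(n:ℝ) * (h - ε)) with hB
  set b' : ℝ := (2:ℝ) ^ (-(n:ℝ) * (h + ε')) with hb'
  set B' : ℝ := (2:ℝ) ^ (-(n:ℝ) * (h - ε')) with hB'
  have hgf : ∀ i, g i ≤ f i / m := by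
    intro i
    have h1 : ν (P i) = (μ X')⁻¹ * μ (X' ∩ P i) := cond_apply hX'meas μ (P i)
    have h2 : (μ (X' ∩ P i)).toReal ≤ f i :=
      ENNReal.toReal_mono (measure_ne_top μ _) (measure_mono Set.inter_subset_right)
    have h3 : g i = (μ (X' ∩ P i)).toReal / m := by
      simp only [hg]
      rw [h1, ENNReal.toReal_mul, ENNReal.toReal_inv, div_eq_inv_mul]
    rw [h3]
    gcongr
  have hfnn : ∀ i, 0 ≤ f i := fun i => ENNReal.toReal_nonneg
  have hgnn : ∀ i, 0 ≤ g i := fun i => ENNReal.toReal_nonneg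
  have hfsum : ∑ i, f i = 1 := sum_toReal_eq_one hP μ
  have hgsum : ∑ i, g i = 1 := sum_toReal_eq_one hP ν
  set pμ : Fin l → Prop := fun i => b < f i ∧ f i < B with hpμ
  set pν : Fin l → Prop := fun i => b' < g i ∧ g i < B' with hpν
  set S : Finset (Fin l) := Finset.univ.filter pμ with hS
  set T : Finset (Fin l) := Finset.univ.filter pν with hT
  have hREs : 1 - ε < ∑ i ∈ S, f i := by
    rw [RoughlyEqual] at hRE; convert hRE using 2
  suffices hgoal : 1 - ε' < ∑ i ∈ T, g i by
    rw [RoughlyEqual]; convert hgoal using 2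
  -- step 1
  have hsplit : ∑ i ∈ S, f i + ∑ i ∈ Finset.univ.filter (fun i => ¬ pμ i), f i = 1 := by
    rw [hS, Finset.sum_filter_add_sum_filter_not, hfsum]
  have step1 : ∑ i ∈ Finset.univ.filter (fun i => ¬ pμ i), f i < ε := by linarith
  -- step 2
  have step2 : ∑ i ∈ Finset.univ.filter (fun i => ¬ pμ i), g i < ε / m := by
    calc ∑ i ∈ Finset.univ.filter (fun i => ¬ pμ i), g i
        ≤ ∑ i ∈ Finset.univ.filter (fun i => ¬ pμ i), f i / m :=
          Finset.sum_le_sum (fun i _ => hgf i)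
      _ = (∑ i ∈ Finset.univ.filter (fun i => ¬ pμ i), f i) / m := by
          rw [Finset.sum_div]
      _ < ε / m := by gcongr
  -- step 3
  have hgsplit : ∑ i ∈ S, g i + ∑ i ∈ Finset.univ.filter (fun i => ¬ pμ i), g i = 1 := by
    rw [hS, Finset.sum_filter_add_sum_filter_not, hgsum]
  have step3 : 1 - ε / m < ∑ i ∈ S, g i := by linarith
  -- step 4 : card bound
  have step4 : (S.card : ℝ) * b ≤ 1 := by
    have h1 : (S.card : ℝ) * b ≤ ∑ i ∈ S, f i := by
      have := Finset.card_nsmul_le_sum S f b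
        (fun i hi => ((Finset.mem_filter.1 hi).2.1).le)
      simpa [nsmul_eq_mul] using this
    have h2 : ∑ i ∈ S, f i ≤ ∑ i, f i :=
      Finset.sum_le_sum_of_subset_of_nonneg (Finset.subset_univ S) (fun i _ _ => hfnn i)
    linarith [hfsum ▸ h2]
  -- step 5
  have hBB' : B / m < B' := by
    have hBeq : B = (2:ℝ) ^ (-(n:ℝ) * (ε' - ε)) * B' := by
      rw [hB, hB', ← Real.rpow_add two_pos]; ring_nf
    have hB'pos : 0 < B' := Real.rpow_pos_of_pos two_pos _
    rw [div_lt_iff₀ hm, hBeq]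
    calc (2:ℝ) ^ (-(n:ℝ) * (ε' - ε)) * B' < m * B' := by
          exact mul_lt_mul_of_pos_right key1 hB'pos
      _ = B' * m := mul_comm _ _
  have step5 : ∀ i ∈ S \ T, g i ≤ b' := by
    intro i hi
    obtain ⟨hiS, hiT⟩ := Finset.mem_sdiff.1 hi
    have hfi : f i < B := (Finset.mem_filter.1 hiS).2.2
    have hgB' : g i < B' := by
      calc g i ≤ f i / m := hgf i
        _ < B / m := by gcongr
        _ < B' := hBB'
    by_contra hcon
    push_neg at hcon
    exact hiT (Finset.mem_filter.2 ⟨Finset.mem_univ i, hcon, hgB'⟩)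
  -- step 6
  have hb'eq : b' = (2:ℝ) ^ (-(n:ℝ) * (ε' - ε)) * b := by
    rw [hb', hb, ← Real.rpow_add two_pos]; ring_nf
  have hb'nn : 0 ≤ b' := (Real.rpow_pos_of_pos two_pos _).le
  have step6 : ∑ i ∈ S \ T, g i ≤ (ε' - ε / m) / 2 := by
    calc ∑ i ∈ S \ T, g i ≤ ((S \ T).card : ℝ) * b' := by
          have := Finset.sum_le_card_nsmul (S \ T) g b' step5
          simpa [nsmul_eq_mul] using this
      _ ≤ (S.card : ℝ) * b' := by
          apply mul_le_mul_of_nonneg_right _ hb'nn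
          exact_mod_cast Finset.card_le_card (Finset.sdiff_subset)
      _ = (2:ℝ) ^ (-(n:ℝ) * (ε' - ε)) * ((S.card : ℝ) * b) := by rw [hb'eq]; ring
      _ ≤ (2:ℝ) ^ (-(n:ℝ) * (ε' - ε)) * 1 := by
          apply mul_le_mul_of_nonneg_left step4 (Real.rpow_pos_of_pos two_pos _).le
      _ ≤ (ε' - ε / m) / 2 := by rw [mul_one]; exact key2.le
  -- step 7
  have step7 : ∑ i ∈ S ∩ T, g i + ∑ i ∈ S \ T, g i = ∑ i ∈ S, g i :=
    Finset.sum_inter_add_sum_sdiff S T g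
  have step8 : ∑ i ∈ S ∩ T, g i ≤ ∑ i ∈ T, g i :=
    Finset.sum_le_sum_of_subset_of_nonneg (Finset.inter_subset_right) (fun i _ _ => hgnn i)
  have hε'eq : ε' = ε / m + (ε' - ε / m) := by ring
  linarith
end
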